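/- For any real number x, the integral over ℝ of (1 - cos(sx))/s² ds equals π·|x|. -/

import Mathlib

open Real MeasureTheory Set Filter Topology

namespace Stmt1Aux

lemma g_nonneg (s : ℝ) : 0 ≤ (1 - Real.cos s) / s ^ 2 :=
  div_nonneg (by nlinarith [Real.cos_le_one s]) (sq_nonneg s)

/-- Integrability of `(1 - cos s)/s²` on ℝ. -/
lemma integrable_g : Integrable (fun s : ℝ => (1 - Real.cos s) / s ^ 2) := by
  refine (integrable_inv_one_add_sq.const_mul (5/2)).mono' ?_ ?_
  · apply Measurable.aestronglyMeasurable
    exact (measurable_const.sub Real.measurable_cos).div (measurable_id.pow_const 2)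
  · refine Filter.Eventually.of_forall fun s => ?_
    rw [Real.norm_eq_abs, abs_of_nonneg (g_nonneg s)]
    rcases eq_or_ne s 0 with rfl | hs
    · simp; positivity
    · rw [div_le_iff₀ (by positivity)]
      have h1 : 1 - Real.cos s ≤ s ^ 2 / 2 := by
        have := Real.one_sub_sq_div_two_le_cos (x := s); linarith
      have h2 : 1 - Real.cos s ≤ 2 := by nlinarith [Real.neg_one_le_cos s]
      have h3 : (0:ℝ) < 1 + s ^ 2 := by positivity
      have h4 : (1 - Real.cos s) * (1 + s ^ 2) ≤ (5/2) * s ^ 2 := by nlinarith [sq_nonneg s]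
      calc 1 - Real.cos s ≤ (5/2 * s ^ 2) / (1 + s ^ 2) := (le_div_iff₀ h3).mpr h4
        _ = 5/2 * (1 + s ^ 2)⁻¹ * s ^ 2 := by field_simp

lemma integrableOn_t_exp {s : ℝ} (hs : 0 < s) :
    IntegrableOn (fun t : ℝ => t * Real.exp (-(s * t))) (Ioi 0) := by
  have := integrableOn_rpow_mul_exp_neg_mul_rpow (p := 1) (s := 1) (b := s)
    (by norm_num) zero_lt_one hs
  refine this.congr_fun (fun t ht => ?_) measurableSet_Ioi
  simp [Real.rpow_one, neg_mul]

lemma integral_t_mul_exp {s : ℝ} (hs : 0 < s) :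
    (∫ t in Ioi (0:ℝ), t * Real.exp (-(s * t))) = 1 / s ^ 2 := by
  have h := Real.integral_rpow_mul_exp_neg_mul_Ioi (a := 2) (r := s) two_pos hs
  have h2 : ∀ t ∈ Ioi (0:ℝ), t ^ ((2:ℝ) - 1) * Real.exp (-(s * t))
      = t * Real.exp (-(s * t)) := by
    intro t _; norm_num
  rw [setIntegral_congr_fun measurableSet_Ioi h2] at h
  rw [h, Real.Gamma_two, mul_one, div_rpow zero_le_one hs.le, Real.one_rpow,
    show ((2:ℝ) = ((2:ℕ):ℝ)) by norm_num, Real.rpow_natCast]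

/-- Laplace transform computation: `∫₀^∞ e^{-st}(1 - cos s) ds = 1/t - t/(1+t²)`. -/
lemma integral_exp_one_sub_cos {t : ℝ} (ht : 0 < t) :
    (∫ s in Ioi (0:ℝ), Real.exp (-(s * t)) * (1 - Real.cos s))
      = 1 / t - t / (1 + t ^ 2) := by
  have h1t : (0:ℝ) < 1 + t ^ 2 := by positivity
  set F : ℝ → ℝ := fun s => -Real.exp (-(s * t)) / t
      - Real.exp (-(s * t)) * (Real.sin s - t * Real.cos s) / (1 + t ^ 2) with hF
  have hderiv : ∀ s ∈ Ici (0:ℝ), HasDerivAt F (Real.exp (-(s * t)) * (1 - Real.cos s)) s := by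
    intro s _
    have hE : HasDerivAt (fun s : ℝ => Real.exp (-(s * t))) (Real.exp (-(s * t)) * -t) s := by
      simpa using (((hasDerivAt_id s).mul_const t).neg).exp
    have hsin : HasDerivAt (fun s : ℝ => Real.sin s - t * Real.cos s)
        (Real.cos s - t * -Real.sin s) s :=
      (Real.hasDerivAt_sin s).sub ((Real.hasDerivAt_cos s).const_mul t)
    have h := ((hE.neg).div_const t).sub ((hE.mul hsin).div_const (1 + t ^ 2))
    refine h.congr_deriv ?_
    field_simp
    ring
  have hint : IntegrableOn (fun s => Real.exp (-(s * t)) * (1 - Real.cos s)) (Ioi 0) := by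
    refine ((exp_neg_integrableOn_Ioi 0 ht).const_mul 2).mono' ?_ ?_
    · apply Continuous.aestronglyMeasurable; continuity
    · refine Filter.Eventually.of_forall fun s => ?_
      have hnn : (0:ℝ) ≤ Real.exp (-(s * t)) * (1 - Real.cos s) :=
        mul_nonneg (Real.exp_pos _).le (by nlinarith [Real.cos_le_one s])
      rw [Real.norm_eq_abs, abs_of_nonneg hnn]
      have h2 : 1 - Real.cos s ≤ 2 := by nlinarith [Real.neg_one_le_cos s]
      calc Real.exp (-(s * t)) * (1 - Real.cos s) ≤ Real.exp (-(s * t)) * 2 :=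
            mul_le_mul_of_nonneg_left h2 (Real.exp_pos _).le
        _ = 2 * Real.exp (-t * s) := by rw [neg_mul, mul_comm t s]; ring
  have hE0 : Tendsto (fun s : ℝ => Real.exp (-(s * t))) atTop (𝓝 0) := by
    have := Real.tendsto_exp_neg_atTop_nhds_zero.comp
      (Filter.tendsto_id.atTop_mul_const ht)
    exact this
  have hb : Tendsto (fun s : ℝ => Real.exp (-(s * t)) * (Real.sin s - t * Real.cos s))
      atTop (𝓝 0) := by
    have h2 : Tendsto (fun s : ℝ => (1 + t) * Real.exp (-(s * t))) atTop (𝓝 0) := by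
      simpa using hE0.const_mul (1 + t)
    refine squeeze_zero_norm (fun s => ?_) h2
    rw [Real.norm_eq_abs, abs_mul, Real.abs_exp]
    have h3 : |Real.sin s - t * Real.cos s| ≤ 1 + t := by
      calc |Real.sin s - t * Real.cos s| ≤ |Real.sin s| + |t * Real.cos s| := abs_sub _ _
        _ = |Real.sin s| + t * |Real.cos s| := by rw [abs_mul, abs_of_pos ht]
        _ ≤ 1 + t * 1 := add_le_add (Real.abs_sin_le_one s)
            (mul_le_mul_of_nonneg_left (Real.abs_cos_le_one s) ht.le)
        _ = 1 + t := by ring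
    calc Real.exp (-(s * t)) * |Real.sin s - t * Real.cos s|
        ≤ Real.exp (-(s * t)) * (1 + t) :=
          mul_le_mul_of_nonneg_left h3 (Real.exp_pos _).le
      _ = (1 + t) * Real.exp (-(s * t)) := mul_comm _ _
  have hlim : Tendsto F atTop (𝓝 0) := by
    have h := ((hE0.div_const t).neg).sub (hb.div_const (1 + t ^ 2))
    simpa [hF, neg_div] using h
  have hkey := integral_Ioi_of_hasDerivAt_of_tendsto' hderiv hint hlim
  rw [hkey, hF]
  simp only [zero_mul, neg_zero, Real.exp_zero, Real.sin_zero, Real.cos_zero]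
  ring

/-- The double integrand. -/
noncomputable def K (s t : ℝ) : ℝ := t * Real.exp (-(s * t)) * (1 - Real.cos s)

lemma inner_t (s : ℝ) (hs : s ∈ Ioi (0:ℝ)) :
    (∫ t in Ioi (0:ℝ), K s t) = (1 - Real.cos s) / s ^ 2 := by
  have : ∀ t : ℝ, K s t = (t * Real.exp (-(s * t))) * (1 - Real.cos s) := fun t => rfl
  simp only [this]
  rw [integral_mul_const, integral_t_mul_exp hs]
  ring

lemma inner_s (t : ℝ) (ht : t ∈ Ioi (0:ℝ)) :
    (∫ s in Ioi (0:ℝ), K s t) = (1 + t ^ 2)⁻¹ := by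
  rw [mem_Ioi] at ht
  have : ∀ s : ℝ, K s t = t * (Real.exp (-(s * t)) * (1 - Real.cos s)) := fun s => by
    simp [K]; ring
  simp only [this]
  rw [integral_const_mul, integral_exp_one_sub_cos ht]
  have h1t : (0:ℝ) < 1 + t ^ 2 := by positivity
  rw [mul_sub, mul_one_div, div_self ht.ne']
  rw [eq_comm, inv_eq_one_div, div_eq_iff h1t.ne']
  field_simp
  ring

lemma integrableK :
    Integrable (Function.uncurry K)
      ((volume.restrict (Ioi (0:ℝ))).prod (volume.restrict (Ioi (0:ℝ)))) := by
  have hc : Continuous fun p : ℝ × ℝ => K p.1 p.2 := by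
    unfold K
    exact (continuous_snd.mul (Real.continuous_exp.comp
      ((continuous_fst.mul continuous_snd).neg))).mul
      (continuous_const.sub (Real.continuous_cos.comp continuous_fst))
  have huncurry : Function.uncurry K = fun p : ℝ × ℝ => K p.1 p.2 := rfl
  rw [huncurry, MeasureTheory.integrable_prod_iff hc.aestronglyMeasurable]
  constructor
  · filter_upwards [self_mem_ae_restrict measurableSet_Ioi] with s hs
    have : Integrable (fun t => (fun t => t * Real.exp (-(s * t))) t * (1 - Real.cos s))
        (volume.restrict (Ioi 0)) := (integrableOn_t_exp hs).mul_const _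
    exact this
  · refine (integrable_g.integrableOn).congr ?_
    filter_upwards [self_mem_ae_restrict measurableSet_Ioi] with s hs
    rw [← inner_t s hs]
    refine setIntegral_congr_fun measurableSet_Ioi fun t htt => ?_
    rw [mem_Ioi] at htt
    have hnn : (0:ℝ) ≤ K s t :=
      mul_nonneg (mul_nonneg htt.le (Real.exp_pos _).le)
        (by nlinarith [Real.cos_le_one s])
    rw [Real.norm_eq_abs, abs_of_nonneg hnn]

lemma half : (∫ s in Ioi (0:ℝ), (1 - Real.cos s) / s ^ 2) = Real.pi / 2 := by
  rw [← setIntegral_congr_fun measurableSet_Ioi inner_t]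
  have hswap := MeasureTheory.integral_integral_swap integrableK
  rw [hswap, setIntegral_congr_fun measurableSet_Ioi inner_s,
    integral_Ioi_inv_one_add_sq]
  simp

lemma whole : (∫ s : ℝ, (1 - Real.cos s) / s ^ 2) = Real.pi := by
  have h : (fun s : ℝ => (1 - Real.cos s) / s ^ 2)
      = fun s : ℝ => (fun u : ℝ => (1 - Real.cos u) / u ^ 2) |s| := by
    funext s
    simp [Real.cos_abs, sq_abs]
  have habs := integral_comp_abs (f := fun u : ℝ => (1 - Real.cos u) / u ^ 2)
  rw [h, habs, half]
  ring

end Stmt1Aux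

/-- For any real x, ∫_ℝ (1 - cos(sx))/s² ds = π·|x|. -/
theorem stmt_1 (x : ℝ) :
    (∫ s : ℝ, (1 - Real.cos (s * x)) / s ^ 2) = Real.pi * |x| := by
  rcases eq_or_ne x 0 with rfl | hx
  · simp
  · have h : (fun s : ℝ => (1 - Real.cos (s * x)) / s ^ 2)
        = fun s : ℝ => x ^ 2 * ((fun u : ℝ => (1 - Real.cos u) / u ^ 2) (x * s)) := by
      funext s
      rcases eq_or_ne s 0 with rfl | hs
      · simp
      · simp only []
        rw [mul_comm s x]
        field_simp
    rw [h, MeasureTheory.integral_const_mul,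
      MeasureTheory.Measure.integral_comp_mul_left (fun u : ℝ => (1 - Real.cos u) / u ^ 2) x,
      Stmt1Aux.whole, smul_eq_mul, abs_inv]
    rw [← sq_abs x]
    field_simp
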